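/- Let d ≥ 2 and g ∈ SL(d, ℝ) with a singular value decomposition g = k_g D_g k_g' (k_g, k_g' orthogonal, D_g diagonal with decreasing positive entries), and for each n ≥ 1 fix a singular value decomposition gⁿ = kₙ Dₙ kₙ'. Assume σ₁(gⁿ)/σ₂(gⁿ) → ∞ as n → ∞. Then ℓ₁(g)/σ₁(g) ≤ σ₂(g)/σ₁(g) + limsup_{n→∞} √(1 − ⟨k_g' kₙ e₁, e_d⟩²), where ℓ₁(g) is the largest modulus of a complex eigenvalue of g. -/

import Mathlib

open Matrix Filter

/-- The list of singular values of a real square matrix, in decreasing order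
(the square roots of the eigenvalues of `Aᴴ * A`). -/
noncomputable def svalList {n : Type*} [Fintype n] [DecidableEq n]
    (A : Matrix n n ℝ) : List ℝ :=
  (Multiset.sort
    (Finset.univ.val.map fun i =>
      Real.sqrt ((show (Aᵀ * A).IsHermitian by
        simpa using Matrix.isHermitian_conjTranspose_mul_self A).eigenvalues i)) (· ≤ ·)).reverse

/-- `sval j A` is the `j`-th largest singular value `σⱼ(A)` of `A` (1-indexed). -/
noncomputable def sval {n : Type*} [Fintype n] [DecidableEq n]
    (j : ℕ) (A : Matrix n n ℝ) : ℝ :=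
  (svalList A).getD (j - 1) 0

/-- The list of moduli of the complex eigenvalues (roots of the characteristic polynomial,
with multiplicity) of a real square matrix, in decreasing order. -/
noncomputable def lvalList {n : Type*} [Fintype n] [DecidableEq n]
    (A : Matrix n n ℝ) : List ℝ :=
  (Multiset.sort
    (((A.charpoly.map (algebraMap ℝ ℂ)).roots).map fun z => ‖z‖) (· ≤ ·)).reverse

/-- `lval j A` is the `j`-th largest modulus `ℓⱼ(A)` of a complex eigenvalue of `A`
(1-indexed). -/
noncomputable def lval {n : Type*} [Fintype n] [DecidableEq n]
    (j : ℕ) (A : Matrix n n ℝ) : ℝ :=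
  (lvalList A).getD (j - 1) 0

/-! ### Auxiliary material -/

/-- The Euclidean norm of a vector in `Fin d → ℝ`. -/
noncomputable def enorm2 {d : ℕ} (x : Fin d → ℝ) : ℝ :=
  ‖(WithLp.equiv 2 (Fin d → ℝ)).symm x‖

section EnormLemmas

variable {d : ℕ}

lemma enorm_nonneg' (x : Fin d → ℝ) : 0 ≤ enorm2 x := norm_nonneg _

lemma enorm_eq (x : Fin d → ℝ) : enorm2 x = Real.sqrt (x ⬝ᵥ x) := by
  rw [enorm2, EuclideanSpace.norm_eq]
  congr 1
  simp [dotProduct, Real.norm_eq_abs, sq_abs, pow_two]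

lemma dot_self_nonneg' (x : Fin d → ℝ) : 0 ≤ x ⬝ᵥ x :=
  Finset.sum_nonneg fun i _ => mul_self_nonneg _

lemma enorm_sq (x : Fin d → ℝ) : enorm2 x ^ 2 = x ⬝ᵥ x := by
  rw [enorm_eq, Real.sq_sqrt (dot_self_nonneg' x)]

lemma enorm2_add_le (x y : Fin d → ℝ) : enorm2 (x + y) ≤ enorm2 x + enorm2 y :=
  norm_add_le ((WithLp.equiv 2 (Fin d → ℝ)).symm x) ((WithLp.equiv 2 (Fin d → ℝ)).symm y)

lemma enorm2_smul (c : ℝ) (x : Fin d → ℝ) : enorm2 (c • x) = |c| * enorm2 x := by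
  have : (WithLp.equiv 2 (Fin d → ℝ)).symm (c • x)
      = c • (WithLp.equiv 2 (Fin d → ℝ)).symm x := rfl
  rw [enorm2, this, norm_smul, Real.norm_eq_abs]; rfl

lemma enorm_single (i : Fin d) (c : ℝ) : enorm2 (Pi.single i c) = |c| := by
  have : enorm2 (Pi.single i c) = ‖EuclideanSpace.single i c‖ := rfl
  rw [this, EuclideanSpace.norm_single, Real.norm_eq_abs]

lemma dot_mulVec_self (A : Matrix (Fin d) (Fin d) ℝ) (h : Aᵀ * A = 1) (x : Fin d → ℝ) :
    (A *ᵥ x) ⬝ᵥ (A *ᵥ x) = x ⬝ᵥ x := by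
  rw [Matrix.dotProduct_mulVec]
  have h2 : (A *ᵥ x) ᵥ* A = x := by
    rw [← Matrix.mulVec_transpose, Matrix.mulVec_mulVec, h, Matrix.one_mulVec]
  rw [h2]

lemma enorm_mulVec_orth {A : Matrix (Fin d) (Fin d) ℝ} (h : A * Aᵀ = 1) (x : Fin d → ℝ) :
    enorm2 (A *ᵥ x) = enorm2 x := by
  rw [enorm_eq, enorm_eq, dot_mulVec_self A (mul_eq_one_comm.mp h) x]

lemma abs_le_enorm (x : Fin d → ℝ) (i : Fin d) : |x i| ≤ enorm2 x := by
  rw [enorm_eq, ← Real.sqrt_sq_eq_abs]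
  apply Real.sqrt_le_sqrt
  have : x i ^ 2 ≤ ∑ j, x j ^ 2 :=
    Finset.single_le_sum (fun j _ => sq_nonneg (x j)) (Finset.mem_univ i)
  simpa [dotProduct, pow_two] using this

lemma enorm_diag_le (D : Fin d → ℝ) (C : ℝ) (hC : 0 ≤ C) (hD : ∀ i, |D i| ≤ C)
    (y : Fin d → ℝ) : enorm2 (Matrix.diagonal D *ᵥ y) ≤ C * enorm2 y := by
  rw [enorm_eq, enorm_eq]
  have h1 : (Matrix.diagonal D *ᵥ y) ⬝ᵥ (Matrix.diagonal D *ᵥ y) ≤ C ^ 2 * (y ⬝ᵥ y) := by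
    simp only [dotProduct, Matrix.mulVec_diagonal, Finset.mul_sum]
    apply Finset.sum_le_sum
    intro i _
    have h2 : (D i) ^ 2 ≤ C ^ 2 := by
      rw [← sq_abs]
      exact pow_le_pow_left₀ (abs_nonneg _) (hD i) 2
    nlinarith [mul_self_nonneg (y i), sq_nonneg (D i)]
  calc Real.sqrt ((Matrix.diagonal D *ᵥ y) ⬝ᵥ (Matrix.diagonal D *ᵥ y))
      ≤ Real.sqrt (C ^ 2 * (y ⬝ᵥ y)) := Real.sqrt_le_sqrt h1
    _ = C * Real.sqrt (y ⬝ᵥ y) := by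
        rw [Real.sqrt_mul (sq_nonneg C), Real.sqrt_sq hC]

lemma enorm_svd_le (Kk Kk' : Matrix (Fin d) (Fin d) ℝ) (D : Fin d → ℝ)
    (hK : Kk * Kkᵀ = 1) (hK' : Kk' * Kk'ᵀ = 1) (C : ℝ) (hC : 0 ≤ C)
    (hD : ∀ i, |D i| ≤ C) (x : Fin d → ℝ) :
    enorm2 ((Kk * Matrix.diagonal D * Kk') *ᵥ x) ≤ C * enorm2 x := by
  have h1 : (Kk * Matrix.diagonal D * Kk') *ᵥ x
      = Kk *ᵥ (Matrix.diagonal D *ᵥ (Kk' *ᵥ x)) := by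
    rw [Matrix.mulVec_mulVec, Matrix.mulVec_mulVec]
  rw [h1, enorm_mulVec_orth hK, ← enorm_mulVec_orth hK' x]
  exact enorm_diag_le D C hC hD _

lemma mulVec3 {d : ℕ} (A B C : Matrix (Fin d) (Fin d) ℝ) (x : Fin d → ℝ) :
    (A * B * C) *ᵥ x = A *ᵥ (B *ᵥ (C *ᵥ x)) := by
  rw [Matrix.mulVec_mulVec, Matrix.mulVec_mulVec]

lemma mulVec2 {d : ℕ} (A B : Matrix (Fin d) (Fin d) ℝ) (x : Fin d → ℝ) :
    (A * B) *ᵥ x = A *ᵥ (B *ᵥ x) := by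
  rw [Matrix.mulVec_mulVec]

lemma diag_mulVec_split (D w : Fin d → ℝ) (j : Fin d) :
    Matrix.diagonal D *ᵥ w
      = (D j * w j) • (Pi.single j 1 : Fin d → ℝ)
        + fun i => if i = j then 0 else D i * w i := by
  funext i
  by_cases h : i = j
  · subst h; simp [Matrix.mulVec_diagonal]
  · simp [Matrix.mulVec_diagonal, h, Pi.single_apply]

lemma enorm_tail_le (D w : Fin d → ℝ) (j : Fin d) (C : ℝ) (hC : 0 ≤ C)
    (hD : ∀ i, i ≠ j → |D i| ≤ C) :
    enorm2 (fun i => if i = j then 0 else D i * w i)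
      ≤ C * Real.sqrt (w ⬝ᵥ w - w j ^ 2) := by
  set r : Fin d → ℝ := fun i => if i = j then 0 else D i * w i with hr
  have hsum : w ⬝ᵥ w - w j ^ 2 = ∑ i ∈ Finset.univ.erase j, w i ^ 2 := by
    rw [dotProduct, ← Finset.sum_erase_add _ _ (Finset.mem_univ j)]
    simp [pow_two]
  have hrr : r ⬝ᵥ r = ∑ i ∈ Finset.univ.erase j, (D i * w i) ^ 2 := by
    rw [dotProduct, ← Finset.sum_erase_add _ _ (Finset.mem_univ j)]
    have h0 : r j = 0 := by simp [hr]
    rw [h0]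
    simp only [mul_zero, add_zero]
    apply Finset.sum_congr rfl
    intro i hi
    have hij : i ≠ j := Finset.ne_of_mem_erase hi
    simp [hr, hij, pow_two]
  have hle : r ⬝ᵥ r ≤ C ^ 2 * (w ⬝ᵥ w - w j ^ 2) := by
    rw [hrr, hsum, Finset.mul_sum]
    apply Finset.sum_le_sum
    intro i hi
    have hij : i ≠ j := Finset.ne_of_mem_erase hi
    have h2 : (D i) ^ 2 ≤ C ^ 2 := by
      rw [← sq_abs]
      exact pow_le_pow_left₀ (abs_nonneg _) (hD i hij) 2
    rw [mul_pow]
    exact mul_le_mul_of_nonneg_right h2 (sq_nonneg _)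
  calc enorm2 r = Real.sqrt (r ⬝ᵥ r) := enorm_eq r
    _ ≤ Real.sqrt (C ^ 2 * (w ⬝ᵥ w - w j ^ 2)) := Real.sqrt_le_sqrt hle
    _ = C * Real.sqrt (w ⬝ᵥ w - w j ^ 2) := by
        rw [Real.sqrt_mul (sq_nonneg C), Real.sqrt_sq hC]

end EnormLemmas

section SpectralLemmas

open Polynomial

variable {d : ℕ}

lemma charpoly_eval_eq (M : Matrix (Fin d) (Fin d) ℂ) (z : ℂ) :
    M.charpoly.eval z = (z • (1 : Matrix (Fin d) (Fin d) ℂ) - M).det := by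
  rw [Matrix.charpoly, ← Polynomial.coe_evalRingHom, RingHom.map_det]
  congr 1
  ext i j
  by_cases h : i = j
  · subst h
    simp [Matrix.charmatrix_apply_eq, Matrix.one_apply, Matrix.smul_apply]
  · simp [Matrix.charmatrix_apply_ne _ _ _ h, Matrix.one_apply, h, Matrix.smul_apply]

lemma exists_eigenvector_of_root (M : Matrix (Fin d) (Fin d) ℂ) (z : ℂ)
    (hz : M.charpoly.eval z = 0) :
    ∃ v : Fin d → ℂ, v ≠ 0 ∧ M *ᵥ v = z • v := by
  rw [charpoly_eval_eq] at hz
  obtain ⟨v, hv, h0⟩ := (Matrix.exists_mulVec_eq_zero_iff).mpr hz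
  refine ⟨v, hv, ?_⟩
  have h1 : (z • (1 : Matrix (Fin d) (Fin d) ℂ) - M) *ᵥ v
      = z • v - M *ᵥ v := by
    rw [Matrix.sub_mulVec, Matrix.smul_mulVec, Matrix.one_mulVec]
  rw [h1] at h0
  linear_combination (norm := module) -h0

lemma lval_one_mem (hd : 1 ≤ d) (g : Matrix (Fin d) (Fin d) ℝ) :
    ∃ z ∈ (g.charpoly.map (algebraMap ℝ ℂ)).roots,
      ‖z‖ = (lvalList g).getD 0 0 := by
  set p := g.charpoly.map (algebraMap ℝ ℂ) with hp
  have hcard : Multiset.card p.roots = d := by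
    have hsplit : p.Splits := IsAlgClosed.splits p
    rw [Polynomial.splits_iff_card_roots.mp hsplit, hp, Polynomial.natDegree_map,
      Matrix.charpoly_natDegree_eq_dim, Fintype.card_fin]
  set s : Multiset ℝ := p.roots.map (fun z => ‖z‖) with hs
  have hlen : (Multiset.sort s (· ≤ ·)).length = d := by
    rw [Multiset.length_sort, hs, Multiset.card_map, hcard]
  have hne : (Multiset.sort s (· ≤ ·)).reverse ≠ [] := by
    intro h
    have := congrArg List.length h
    simp [hlen] at this
    omega
  obtain ⟨a, t, ht⟩ := List.exists_cons_of_ne_nil hne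
  have hmem : a ∈ s := by
    have : a ∈ (Multiset.sort s (· ≤ ·)).reverse := ht ▸ List.mem_cons_self
    exact (Multiset.mem_sort _).mp (List.mem_reverse.mp this)
  obtain ⟨z, hz1, hz2⟩ := Multiset.mem_map.mp hmem
  refine ⟨z, hz1, ?_⟩
  rw [hz2, lvalList, ← hp, ← hs, ht]
  rfl

lemma abs_le_of_eigen (A : Matrix (Fin d) (Fin d) ℝ) (C : ℝ) (hC : 0 ≤ C)
    (hA : ∀ x : Fin d → ℝ, enorm2 (A *ᵥ x) ≤ C * enorm2 x)
    (z : ℂ) (v : Fin d → ℂ) (hv : v ≠ 0)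
    (heq : (A.map (algebraMap ℝ ℂ)) *ᵥ v = z • v) :
    ‖z‖ ≤ C := by
  set a : Fin d → ℝ := fun i => (v i).re with ha
  set b : Fin d → ℝ := fun i => (v i).im with hb
  have hAa : A *ᵥ a = fun i => (z * v i).re := by
    funext i
    have h1 : ((A.map (algebraMap ℝ ℂ)) *ᵥ v) i = (z • v) i := by rw [heq]
    have h2 : ((A.map (algebraMap ℝ ℂ)) *ᵥ v) i = ∑ j, (A i j : ℂ) * v j := by
      simp [Matrix.mulVec, dotProduct, Matrix.map_apply]
    simp only [h2, Pi.smul_apply, smul_eq_mul] at h1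
    have h3 : (∑ j, (A i j : ℂ) * v j).re = ∑ j, A i j * (v j).re := by
      rw [Complex.re_sum]
      exact Finset.sum_congr rfl fun j _ => by simp
    rw [show (A *ᵥ a) i = ∑ j, A i j * (v j).re by simp [Matrix.mulVec, dotProduct, ha]]
    rw [← h3, h1]
  have hAb : A *ᵥ b = fun i => (z * v i).im := by
    funext i
    have h1 : ((A.map (algebraMap ℝ ℂ)) *ᵥ v) i = (z • v) i := by rw [heq]
    have h2 : ((A.map (algebraMap ℝ ℂ)) *ᵥ v) i = ∑ j, (A i j : ℂ) * v j := by
      simp [Matrix.mulVec, dotProduct, Matrix.map_apply]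
    simp only [h2, Pi.smul_apply, smul_eq_mul] at h1
    have h3 : (∑ j, (A i j : ℂ) * v j).im = ∑ j, A i j * (v j).im := by
      rw [Complex.im_sum]
      exact Finset.sum_congr rfl fun j _ => by simp
    rw [show (A *ᵥ b) i = ∑ j, A i j * (v j).im by simp [Matrix.mulVec, dotProduct, hb]]
    rw [← h3, h1]
  set S : ℝ := a ⬝ᵥ a + b ⬝ᵥ b with hS
  have hSeq : S = ∑ i, Complex.normSq (v i) := by
    rw [hS, dotProduct, dotProduct, ← Finset.sum_add_distrib]
    exact Finset.sum_congr rfl fun i _ => by simp [Complex.normSq_apply, ha, hb]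
  have hSpos : 0 < S := by
    rw [hSeq]
    obtain ⟨i, hi⟩ := Function.ne_iff.mp hv
    have h1 : 0 < Complex.normSq (v i) := Complex.normSq_pos.mpr hi
    have h2 : ∀ j ∈ Finset.univ, 0 ≤ Complex.normSq (v j) :=
      fun j _ => Complex.normSq_nonneg _
    exact lt_of_lt_of_le h1 (Finset.single_le_sum h2 (Finset.mem_univ i))
  have hkey : Complex.normSq z * S ≤ C ^ 2 * S := by
    have h1 : (A *ᵥ a) ⬝ᵥ (A *ᵥ a) + (A *ᵥ b) ⬝ᵥ (A *ᵥ b) = Complex.normSq z * S := by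
      rw [hAa, hAb, hSeq, dotProduct, dotProduct, ← Finset.sum_add_distrib, Finset.mul_sum]
      refine Finset.sum_congr rfl fun i _ => ?_
      have := Complex.normSq_mul z (v i)
      simp only [Complex.normSq_apply] at this ⊢
      nlinarith [this]
    have h2 : (A *ᵥ a) ⬝ᵥ (A *ᵥ a) ≤ C ^ 2 * (a ⬝ᵥ a) := by
      have h3 := pow_le_pow_left₀ (enorm_nonneg' _) (hA a) 2
      rw [enorm_sq, mul_pow, enorm_sq] at h3
      exact h3
    have h2b : (A *ᵥ b) ⬝ᵥ (A *ᵥ b) ≤ C ^ 2 * (b ⬝ᵥ b) := by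
      have h3 := pow_le_pow_left₀ (enorm_nonneg' _) (hA b) 2
      rw [enorm_sq, mul_pow, enorm_sq] at h3
      exact h3
    rw [← h1, hS]; ring_nf; ring_nf at h2 h2b; linarith
  have hz2 : Complex.normSq z ≤ C ^ 2 := le_of_mul_le_mul_right (by linarith [hkey]) hSpos
  calc ‖z‖ = Real.sqrt (Complex.normSq z) := Complex.norm_def z
    _ ≤ Real.sqrt (C ^ 2) := Real.sqrt_le_sqrt hz2
    _ = C := Real.sqrt_sq hC

lemma pow_eigen (M : Matrix (Fin d) (Fin d) ℂ) (z : ℂ) (v : Fin d → ℂ)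
    (h : M *ᵥ v = z • v) (n : ℕ) : (M ^ n) *ᵥ v = z ^ n • v := by
  induction n with
  | zero => simp
  | succ m ih =>
    rw [pow_succ, ← Matrix.mulVec_mulVec, h, Matrix.mulVec_smul, ih, smul_smul, pow_succ]
    ring_nf

lemma map_pow_complex (g : Matrix (Fin d) (Fin d) ℝ) (n : ℕ) :
    (g ^ n).map (algebraMap ℝ ℂ) = (g.map (algebraMap ℝ ℂ)) ^ n := by
  simpa using map_pow ((algebraMap ℝ ℂ).mapMatrix) g n

end SpectralLemmas

/-- Let `d ≥ 2`, `g ∈ SL(d, ℝ)` with a singular value decomposition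
`g = k_g D_g k_g'`, and for each `n ≥ 1` fix a singular value decomposition
`gⁿ = kₙ Dₙ kₙ'`.  If `σ₁(gⁿ)/σ₂(gⁿ) → ∞`, then
`ℓ₁(g)/σ₁(g) ≤ σ₂(g)/σ₁(g) + limsupₙ √(1 − ⟨k_g' kₙ e₁, e_d⟩²)`,
where `ℓ₁(g)` is the spectral radius of `g`. -/
theorem spectral_radius_sigma_one_bound
    (d : ℕ) (hd : 2 ≤ d)
    (g : Matrix (Fin d) (Fin d) ℝ) (hgdet : g.det = 1)
    (kg kg' : Matrix (Fin d) (Fin d) ℝ)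
    (hkg : kg * kgᵀ = 1) (hkg' : kg' * kg'ᵀ = 1)
    (Dg : Fin d → ℝ)
    (hDgpos : ∀ i, 0 < Dg i) (hDganti : ∀ i j : Fin d, i ≤ j → Dg j ≤ Dg i)
    (hgdec : g = kg * Matrix.diagonal Dg * kg')
    (K K' : ℕ → Matrix (Fin d) (Fin d) ℝ) (DN : ℕ → Fin d → ℝ)
    (hKdec : ∀ n : ℕ, 1 ≤ n →
      K n * (K n)ᵀ = 1 ∧ K' n * (K' n)ᵀ = 1 ∧
      (∀ i, 0 < DN n i) ∧ (∀ i j : Fin d, i ≤ j → DN n j ≤ DN n i) ∧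
      g ^ n = K n * Matrix.diagonal (DN n) * K' n)
    (hdiv : Tendsto (fun n : ℕ => DN n ⟨0, by omega⟩ / DN n ⟨1, by omega⟩) atTop atTop) :
    lval 1 g / Dg ⟨0, by omega⟩ ≤
      Dg ⟨1, by omega⟩ / Dg ⟨0, by omega⟩ +
        limsup (fun n : ℕ =>
          Real.sqrt (1 - ((kg' * K n) ⟨d - 1, by omega⟩ ⟨0, by omega⟩) ^ 2)) atTop := by
  have hd1 : 1 ≤ d := by omega
  have hd0 : 0 < d := by omega
  have hd1' : 1 < d := by omega
  set i0 : Fin d := ⟨0, hd0⟩ with hi0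
  set i1 : Fin d := ⟨1, hd1'⟩ with hi1
  set idl : Fin d := ⟨d - 1, by omega⟩ with hidl
  set sfun : ℕ → ℝ := fun n => Real.sqrt (1 - ((kg' * K n) idl i0) ^ 2) with hsfun
  -- Fin order facts
  have hle0 : ∀ i : Fin d, i0 ≤ i := fun i => by
    rw [Fin.le_def]; exact Nat.zero_le _
  have h1le : ∀ i : Fin d, i ≠ i0 → i1 ≤ i := by
    intro i hne
    rw [Fin.le_def]
    have hv : (i : ℕ) ≠ 0 := fun h => hne (Fin.ext h)
    show 1 ≤ (i : ℕ)
    omega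
  have h1dl : i1 ≤ idl := by
    rw [Fin.le_def]
    show 1 ≤ d - 1
    omega
  -- the operator-norm bound for g
  have hgb : ∀ x : Fin d → ℝ, enorm2 (g *ᵥ x) ≤ Dg i0 * enorm2 x := by
    intro x
    rw [hgdec]
    exact enorm_svd_le kg kg' Dg hkg hkg' _ (le_of_lt (hDgpos i0))
      (fun i => by rw [abs_of_pos (hDgpos i)]; exact hDganti i0 i (hle0 i)) x
  -- Step A: eigenvalue of maximal modulus
  obtain ⟨z, hzroots, hzabs⟩ := lval_one_mem hd1 g
  have heval : (g.map (algebraMap ℝ ℂ)).charpoly.eval z = 0 := by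
    rw [Matrix.charpoly_map]
    exact (Polynomial.mem_roots'.mp hzroots).2
  obtain ⟨v, hv, heigen⟩ := exists_eigenvector_of_root _ z heval
  set ℓ : ℝ := ‖z‖ with hℓ
  have hℓ0 : 0 ≤ ℓ := norm_nonneg _
  have hlv : lval 1 g = ℓ := by rw [lval]; exact hzabs.symm
  -- Step B: ℓ ^ n ≤ σ₁(gⁿ)
  have hl : ∀ n : ℕ, 1 ≤ n → ℓ ^ n ≤ DN n i0 := by
    intro n hn
    obtain ⟨hKn, hK'n, hpos, hanti, hdecn⟩ := hKdec n hn
    have hb : ∀ x : Fin d → ℝ, enorm2 ((g ^ n) *ᵥ x) ≤ DN n i0 * enorm2 x := by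
      intro x
      rw [hdecn]
      exact enorm_svd_le _ _ _ hKn hK'n _ (le_of_lt (hpos i0))
        (fun i => by rw [abs_of_pos (hpos i)]; exact hanti i0 i (hle0 i)) x
    have heqn : ((g ^ n).map (algebraMap ℝ ℂ)) *ᵥ v = (z ^ n) • v := by
      rw [map_pow_complex]; exact pow_eigen _ z v heigen n
    have := abs_le_of_eigen (g ^ n) (DN n i0) (le_of_lt (hpos i0)) hb (z ^ n) v hv heqn
    simpa [map_pow] using this
  -- basic bounds on sfun
  have hs0 : ∀ n, 0 ≤ sfun n := fun n => Real.sqrt_nonneg _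
  have hs1 : ∀ n, sfun n ≤ 1 := by
    intro n
    apply Real.sqrt_le_one.mpr
    nlinarith [sq_nonneg ((kg' * K n) idl i0)]
  have hbdd : IsBoundedUnder (· ≤ ·) atTop sfun := isBoundedUnder_of ⟨1, hs1⟩
  set L : ℝ := limsup sfun atTop with hL
  have hL0 : 0 ≤ L := le_limsup_of_frequently_le (Frequently.of_forall hs0) hbdd
  -- Step C: the key recursive inequality
  have hkey : ∀ n : ℕ, 1 ≤ n →
      DN (n + 1) i0 ≤ DN n i0 * (Dg i1 + Dg i0 * sfun n) + DN n i1 * Dg i0 := by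
    intro n hn
    obtain ⟨hKn, hK'n, hpos, hanti, hdecn⟩ := hKdec n hn
    obtain ⟨hKm, hK'm, hposm, hantim, hdecm⟩ := hKdec (n + 1) (by omega)
    set x : Fin d → ℝ := (K' (n + 1))ᵀ *ᵥ Pi.single i0 1 with hx
    have hK'x : K' (n + 1) *ᵥ x = Pi.single i0 1 := by
      rw [hx, Matrix.mulVec_mulVec, hK'm, Matrix.one_mulVec]
    have hxn : enorm2 x = 1 := by
      have horth : (K' (n + 1))ᵀ * ((K' (n + 1))ᵀ)ᵀ = 1 := by
        rw [Matrix.transpose_transpose]; exact mul_eq_one_comm.mp hK'm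
      rw [hx, enorm_mulVec_orth horth, enorm_single]; norm_num
    have hDN1 : DN (n + 1) i0 = enorm2 ((g ^ (n + 1)) *ᵥ x) := by
      rw [hdecm, mulVec3, hK'x, Matrix.diagonal_mulVec_single, enorm_mulVec_orth hKm,
        enorm_single, mul_one, abs_of_pos (hposm i0)]
    set w : Fin d → ℝ := K' n *ᵥ x with hw
    have hwn : enorm2 w = 1 := by rw [hw, enorm_mulVec_orth hK'n, hxn]
    have hwdot : w ⬝ᵥ w = 1 := by rw [← enorm_sq, hwn]; norm_num
    set r : Fin d → ℝ := fun i => if i = i0 then 0 else DN n i * w i with hr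
    have hgn : (g ^ n) *ᵥ x
        = (DN n i0 * w i0) • (K n *ᵥ (Pi.single i0 1 : Fin d → ℝ)) + K n *ᵥ r := by
      rw [hdecn, mulVec3, ← hw, diag_mulVec_split (DN n) w i0, Matrix.mulVec_add,
        Matrix.mulVec_smul]
    have hsucc : (g ^ (n + 1)) *ᵥ x
        = (DN n i0 * w i0) • (g *ᵥ (K n *ᵥ (Pi.single i0 1 : Fin d → ℝ)))
          + g *ᵥ (K n *ᵥ r) := by
      rw [pow_succ', mulVec2, hgn, Matrix.mulVec_add, Matrix.mulVec_smul]
    -- bound on the top direction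
    have hb2 : enorm2 (g *ᵥ (K n *ᵥ (Pi.single i0 1 : Fin d → ℝ)))
        ≤ Dg i1 + Dg i0 * sfun n := by
      set y : Fin d → ℝ := kg' *ᵥ (K n *ᵥ (Pi.single i0 1 : Fin d → ℝ)) with hy
      have hyc : y idl = (kg' * K n) idl i0 := by
        rw [hy, Matrix.mulVec_mulVec]
        simp [Matrix.mulVec, dotProduct, Pi.single_apply]
      have hyn : enorm2 y = 1 := by
        rw [hy, enorm_mulVec_orth hkg', enorm_mulVec_orth hKn, enorm_single]; norm_num
      have hydot : y ⬝ᵥ y = 1 := by rw [← enorm_sq, hyn]; norm_num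
      have hgKn : g *ᵥ (K n *ᵥ (Pi.single i0 1 : Fin d → ℝ))
          = kg *ᵥ (Matrix.diagonal Dg *ᵥ y) := by
        rw [hgdec, mulVec3, hy]
      rw [hgKn, enorm_mulVec_orth hkg, diag_mulVec_split Dg y idl]
      have htri := enorm2_add_le ((Dg idl * y idl) • (Pi.single idl 1 : Fin d → ℝ))
        (fun i => if i = idl then 0 else Dg i * y i)
      have h1 : enorm2 ((Dg idl * y idl) • (Pi.single idl 1 : Fin d → ℝ)) ≤ Dg i1 := by
        rw [enorm2_smul, enorm_single, abs_one, mul_one, abs_mul, abs_of_pos (hDgpos idl)]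
        have hy1 : |y idl| ≤ 1 := by
          have := abs_le_enorm y idl; rw [hyn] at this; exact this
        calc Dg idl * |y idl| ≤ Dg idl * 1 :=
              mul_le_mul_of_nonneg_left hy1 (le_of_lt (hDgpos idl))
          _ = Dg idl := mul_one _
          _ ≤ Dg i1 := hDganti i1 idl h1dl
      have h2 : enorm2 (fun i => if i = idl then 0 else Dg i * y i) ≤ Dg i0 * sfun n := by
        have := enorm_tail_le Dg y idl (Dg i0) (le_of_lt (hDgpos i0))
          (fun i _ => by rw [abs_of_pos (hDgpos i)]; exact hDganti i0 i (hle0 i))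
        rw [hydot, hyc] at this
        exact this
      calc enorm2 ((Dg idl * y idl) • (Pi.single idl 1 : Fin d → ℝ)
            + fun i => if i = idl then 0 else Dg i * y i)
          ≤ enorm2 ((Dg idl * y idl) • (Pi.single idl 1 : Fin d → ℝ))
            + enorm2 (fun i => if i = idl then 0 else Dg i * y i) := htri
        _ ≤ Dg i1 + Dg i0 * sfun n := add_le_add h1 h2
    -- bound on the tail
    have hb3 : enorm2 (g *ᵥ (K n *ᵥ r)) ≤ Dg i0 * DN n i1 := by
      have h1 : enorm2 (g *ᵥ (K n *ᵥ r)) ≤ Dg i0 * enorm2 (K n *ᵥ r) := hgb _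
      rw [enorm_mulVec_orth hKn] at h1
      have h2 : enorm2 r ≤ DN n i1 := by
        have h3 := enorm_tail_le (DN n) w i0 (DN n i1) (le_of_lt (hpos i1))
          (fun i hi => by rw [abs_of_pos (hpos i)]; exact hanti i1 i (h1le i hi))
        rw [hwdot] at h3
        have h4 : Real.sqrt (1 - w i0 ^ 2) ≤ 1 := by
          apply Real.sqrt_le_one.mpr; nlinarith [sq_nonneg (w i0)]
        calc enorm2 r ≤ DN n i1 * Real.sqrt (1 - w i0 ^ 2) := h3
          _ ≤ DN n i1 * 1 := mul_le_mul_of_nonneg_left h4 (le_of_lt (hpos i1))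
          _ = DN n i1 := mul_one _
      calc enorm2 (g *ᵥ (K n *ᵥ r)) ≤ Dg i0 * enorm2 r := h1
        _ ≤ Dg i0 * DN n i1 := mul_le_mul_of_nonneg_left h2 (le_of_lt (hDgpos i0))
    have habs : |DN n i0 * w i0| ≤ DN n i0 := by
      rw [abs_mul, abs_of_pos (hpos i0)]
      have hw1 : |w i0| ≤ 1 := by
        have := abs_le_enorm w i0; rw [hwn] at this; exact this
      calc DN n i0 * |w i0| ≤ DN n i0 * 1 :=
            mul_le_mul_of_nonneg_left hw1 (le_of_lt (hpos i0))
        _ = DN n i0 := mul_one _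
    calc DN (n + 1) i0 = enorm2 ((g ^ (n + 1)) *ᵥ x) := hDN1
      _ = enorm2 ((DN n i0 * w i0) • (g *ᵥ (K n *ᵥ (Pi.single i0 1 : Fin d → ℝ)))
            + g *ᵥ (K n *ᵥ r)) := by rw [hsucc]
      _ ≤ enorm2 ((DN n i0 * w i0) • (g *ᵥ (K n *ᵥ (Pi.single i0 1 : Fin d → ℝ))))
            + enorm2 (g *ᵥ (K n *ᵥ r)) := enorm2_add_le _ _
      _ = |DN n i0 * w i0| * enorm2 (g *ᵥ (K n *ᵥ (Pi.single i0 1 : Fin d → ℝ)))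
            + enorm2 (g *ᵥ (K n *ᵥ r)) := by rw [enorm2_smul]
      _ ≤ DN n i0 * (Dg i1 + Dg i0 * sfun n) + Dg i0 * DN n i1 :=
          add_le_add (mul_le_mul habs hb2 (enorm_nonneg' _) (le_of_lt (hpos i0))) hb3
      _ = DN n i0 * (Dg i1 + Dg i0 * sfun n) + DN n i1 * Dg i0 := by ring
  -- Step D: conclude via the limsup argument
  suffices H : lval 1 g / Dg i0 ≤ Dg i1 / Dg i0 + L by exact H
  rw [hlv]
  have hσ₁ : 0 < Dg i0 := hDgpos i0
  suffices hmain : ℓ ≤ Dg i1 + Dg i0 * L by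
    rw [div_le_iff₀ hσ₁, add_mul, div_mul_cancel₀ _ (ne_of_gt hσ₁)]
    nlinarith [hmain]
  by_contra hcon
  push_neg at hcon
  set q : ℝ := (Dg i1 + Dg i0 * L + ℓ) / 2 with hq
  have hq1 : Dg i1 + Dg i0 * L < q := by rw [hq]; linarith
  have hq2 : q < ℓ := by rw [hq]; linarith
  have hq0 : 0 < q := by
    have := mul_nonneg (le_of_lt hσ₁) hL0
    have := hDgpos i1
    rw [hq]; linarith
  set δ : ℝ := q - (Dg i1 + Dg i0 * L) with hδdef
  have hδ : 0 < δ := by rw [hδdef]; linarith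
  have hE1 : ∀ᶠ n in atTop, sfun n < L + δ / (2 * Dg i0) := by
    apply eventually_lt_of_limsup_lt _ hbdd
    rw [← hL]
    have : 0 < δ / (2 * Dg i0) := div_pos hδ (by linarith)
    linarith
  have hE2 : Tendsto (fun n : ℕ => DN n i1 / DN n i0) atTop (nhds 0) := by
    have h := hdiv.inv_tendsto_atTop
    have heqf : (fun n : ℕ => DN n i0 / DN n i1)⁻¹ = fun n : ℕ => DN n i1 / DN n i0 := by
      funext n; simp [Pi.inv_apply, inv_div]
    rw [show (fun n : ℕ => DN n ⟨0, by omega⟩ / DN n ⟨1, by omega⟩)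
        = (fun n : ℕ => DN n i0 / DN n i1) from rfl] at h
    rwa [heqf] at h
  have hE3 : ∀ᶠ n in atTop, DN n i1 / DN n i0 < δ / (2 * Dg i0) :=
    hE2.eventually_lt_const (div_pos hδ (by linarith))
  have hE4 : ∀ᶠ n in atTop, 1 ≤ n := eventually_ge_atTop 1
  have hEv : ∀ᶠ n in atTop, DN (n + 1) i0 ≤ DN n i0 * q := by
    filter_upwards [hE1, hE3, hE4] with n h1 h3 h4
    obtain ⟨_, _, hpos, _, _⟩ := hKdec n h4
    have hDN0 : 0 < DN n i0 := hpos i0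
    have hstep := hkey n h4
    have hexp : DN n i0 * (Dg i1 + Dg i0 * sfun n) + DN n i1 * Dg i0
        = DN n i0 * (Dg i1 + Dg i0 * sfun n + Dg i0 * (DN n i1 / DN n i0)) := by
      field_simp
    have hq' : Dg i1 + Dg i0 * sfun n + Dg i0 * (DN n i1 / DN n i0) ≤ q := by
      have e1 : Dg i0 * sfun n ≤ Dg i0 * (L + δ / (2 * Dg i0)) :=
        mul_le_mul_of_nonneg_left (le_of_lt h1) (le_of_lt hσ₁)
      have e2 : Dg i0 * (DN n i1 / DN n i0) ≤ Dg i0 * (δ / (2 * Dg i0)) :=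
        mul_le_mul_of_nonneg_left (le_of_lt h3) (le_of_lt hσ₁)
      have e3 : Dg i0 * (δ / (2 * Dg i0)) = δ / 2 := by field_simp
      have e4 : Dg i0 * (L + δ / (2 * Dg i0)) = Dg i0 * L + δ / 2 := by field_simp
      have e5 : Dg i1 + Dg i0 * L + δ = q := by rw [hδdef]; ring
      rw [e3] at e2
      rw [e4] at e1
      linarith
    calc DN (n + 1) i0 ≤ DN n i0 * (Dg i1 + Dg i0 * sfun n) + DN n i1 * Dg i0 := hstep
      _ = DN n i0 * (Dg i1 + Dg i0 * sfun n + Dg i0 * (DN n i1 / DN n i0)) := hexp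
      _ ≤ DN n i0 * q := mul_le_mul_of_nonneg_left hq' (le_of_lt hDN0)
  obtain ⟨N₀, hN₀⟩ := eventually_atTop.mp hEv
  set N1 : ℕ := max N₀ 1 with hN1
  have hN11 : 1 ≤ N1 := le_max_right _ _
  have hN1N₀ : N₀ ≤ N1 := le_max_left _ _
  have hgeo : ∀ m : ℕ, DN (N1 + m) i0 ≤ DN N1 i0 * q ^ m := by
    intro m
    induction m with
    | zero => simp
    | succ k ih =>
      have h1 : DN (N1 + k + 1) i0 ≤ DN (N1 + k) i0 * q := hN₀ (N1 + k) (by omega)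
      calc DN (N1 + (k + 1)) i0 = DN (N1 + k + 1) i0 := by ring_nf
        _ ≤ DN (N1 + k) i0 * q := h1
        _ ≤ (DN N1 i0 * q ^ k) * q := mul_le_mul_of_nonneg_right ih (le_of_lt hq0)
        _ = DN N1 i0 * q ^ (k + 1) := by ring
  have hℓpos : 0 < ℓ := lt_trans hq0 hq2
  have hpowN1 : 0 < ℓ ^ N1 := pow_pos hℓpos N1
  set C0 : ℝ := DN N1 i0 / ℓ ^ N1 with hC0def
  have hC0 : ∀ m : ℕ, (ℓ / q) ^ m ≤ C0 := by
    intro m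
    have hpow : ℓ ^ (N1 + m) ≤ DN N1 i0 * q ^ m := (hl (N1 + m) (by omega)).trans (hgeo m)
    rw [div_pow, div_le_iff₀ (pow_pos hq0 m)]
    have heq1 : C0 * q ^ m = DN N1 i0 * q ^ m / ℓ ^ N1 := by rw [hC0def]; ring
    rw [heq1, le_div_iff₀ hpowN1]
    calc ℓ ^ m * ℓ ^ N1 = ℓ ^ (N1 + m) := by rw [← pow_add]; ring_nf
      _ ≤ DN N1 i0 * q ^ m := hpow
  have hgt : Tendsto (fun m : ℕ => (ℓ / q) ^ m) atTop atTop :=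
    tendsto_pow_atTop_atTop_of_one_lt ((one_lt_div hq0).mpr hq2)
  obtain ⟨m, hm⟩ := (hgt.eventually_gt_atTop C0).exists
  exact absurd (hC0 m) (not_le.mpr hm)
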